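/- Let $X_1, \ldots, X_n$ be square-integrable random variables grouped so that variables in the same group are almost surely equal and variables in different groups are independent, with $n_i$ the size of the group containing $X_i$. Suppose each $X_i$ is supported on $[0, t_i c_i]$ with $t_i = r/(c_i n_i)$ where $r = \sum_i c_i$ and each $X_i$ satisfies $p\Pr[X_i \ge p] \le c_i$ for all $p > 0$. Then $\mathrm{Var}\left(\sum_i X_i\right) \le 2r^2$. -/

import Mathlib

open MeasureTheory ProbabilityTheory

open Set in

lemma sq_integral_le_aux {Ω : Type*} [MeasurableSpace Ω] (P : Measure Ω) [IsProbabilityMeasure P]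
    (X : Ω → ℝ) (hXm : Measurable X) (M c : ℝ) (hM : 0 ≤ M) (hc : 0 ≤ c)
    (hsupp : ∀ ω, 0 ≤ X ω ∧ X ω ≤ M)
    (hrev : ∀ p : ℝ, 0 < p → p * (P {ω | X ω ≥ p}).toReal ≤ c) :
    ∫ ω, X ω ^ 2 ∂P ≤ 2 * c * M := by
  have key := lintegral_comp_eq_lintegral_meas_le_mul P (f := X) (g := fun s => 2 * s)
    (ae_of_all _ fun ω => (hsupp ω).1) hXm.aemeasurable
    (fun s _ => (continuous_const.mul continuous_id).intervalIntegrable 0 s)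
    (by filter_upwards [ae_restrict_mem measurableSet_Ioi] with s hs; simp only [Set.mem_Ioi] at hs; positivity)
  have hsq : ∀ ω, (∫ s in (0)..(X ω), 2 * s) = X ω ^ 2 := by
    intro ω
    rw [intervalIntegral.integral_const_mul, integral_id]
    ring
  have hLHS : ∫⁻ ω, ENNReal.ofReal (X ω ^ 2) ∂P
      = ∫⁻ s in Ioi (0:ℝ), P {a | s ≤ X a} * ENNReal.ofReal (2 * s) := by
    rw [← key]; congr 1; funext ω; rw [hsq]
  have hbound : ∫⁻ s in Ioi (0:ℝ), P {a | s ≤ X a} * ENNReal.ofReal (2 * s)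
      ≤ ENNReal.ofReal (2 * c * M) := by
    have hmono : ∀ s ∈ Ioi (0:ℝ), P {a | s ≤ X a} * ENNReal.ofReal (2 * s)
        ≤ (Ioc (0:ℝ) M).indicator (fun _ => ENNReal.ofReal (2 * c)) s := by
      intro s hs
      simp only [mem_Ioi] at hs
      by_cases hsM : s ≤ M
      · rw [indicator_of_mem (by exact ⟨hs, hsM⟩)]
        have hfin : P {a | s ≤ X a} = ENNReal.ofReal ((P {a | s ≤ X a}).toReal) :=
          (ENNReal.ofReal_toReal (measure_ne_top _ _)).symm
        rw [hfin, ← ENNReal.ofReal_mul ENNReal.toReal_nonneg]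
        apply ENNReal.ofReal_le_ofReal
        have := hrev s hs
        calc (P {a | s ≤ X a}).toReal * (2 * s)
            = 2 * (s * (P {ω | X ω ≥ s}).toReal) := by ring_nf
          _ ≤ 2 * c := by linarith
      · rw [indicator_of_notMem (by simp [mem_Ioc]; intro _; linarith)]
        have hempty : {a | s ≤ X a} = ∅ := by
          ext a; simp only [mem_setOf_eq, mem_empty_iff_false, iff_false, not_le]
          exact lt_of_le_of_lt (hsupp a).2 (lt_of_not_ge hsM)
        rw [hempty]; simp
    calc ∫⁻ s in Ioi (0:ℝ), P {a | s ≤ X a} * ENNReal.ofReal (2 * s)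
        ≤ ∫⁻ s in Ioi (0:ℝ), (Ioc (0:ℝ) M).indicator (fun _ => ENNReal.ofReal (2 * c)) s :=
          setLIntegral_mono' measurableSet_Ioi hmono
      _ = ENNReal.ofReal (2 * c) * (volume.restrict (Ioi 0)) (Ioc (0:ℝ) M) := by
          rw [lintegral_indicator measurableSet_Ioc, setLIntegral_const]
      _ ≤ ENNReal.ofReal (2 * c * M) := by
          rw [Measure.restrict_apply measurableSet_Ioc]
          have : Ioc (0:ℝ) M ∩ Ioi 0 = Ioc 0 M := by
            ext x; simp [mem_Ioc, mem_Ioi]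
          rw [this, Real.volume_Ioc, ← ENNReal.ofReal_mul (by positivity : (0:ℝ) ≤ 2*c)]
          exact ENNReal.ofReal_le_ofReal (by nlinarith)
  have hint : ∫ ω, X ω ^ 2 ∂P = (∫⁻ ω, ENNReal.ofReal (X ω ^ 2) ∂P).toReal := by
    rw [integral_eq_lintegral_of_nonneg_ae (ae_of_all _ fun ω => sq_nonneg _)
      ((hXm.pow_const 2).aestronglyMeasurable)]
  rw [hint, hLHS]
  exact ENNReal.toReal_le_of_le_ofReal (by positivity) hbound

/-- Core-variance bound for a semi-independent family: with group sizes `n_i`,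
thresholds `t_i = r/(c_i n_i)` where `r = ∑ c_i`, each `X_i` supported on `[0, t_i c_i]`
with posted-price revenue at most `c_i`, the variance of the sum is at most `2r²`. -/
theorem variance_sum_le_two_r_sq (Ω : Type*) [MeasurableSpace Ω]
    (P : Measure Ω) [IsProbabilityMeasure P]
    (n m : ℕ) (X : Fin n → Ω → ℝ) (g : Fin n → Fin m)
    (hXm : ∀ i, Measurable (X i))
    (hL2 : ∀ i, MemLp (X i) 2 P)
    (hsame : ∀ i j, g i = g j → X i =ᵐ[P] X j)
    (hindep : ∀ i j, g i ≠ g j → IndepFun (X i) (X j) P)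
    (c : Fin n → ℝ) (hc : ∀ i, 0 < c i)
    (r : ℝ) (hr : r = ∑ i, c i)
    (t : Fin n → ℝ)
    (ht : ∀ i, t i = r / (c i * ((Finset.univ.filter fun j => g j = g i).card : ℝ)))
    (hsupp : ∀ i ω, 0 ≤ X i ω ∧ X i ω ≤ t i * c i)
    (hrev : ∀ i, ∀ p : ℝ, 0 < p → p * (P {ω | X i ω ≥ p}).toReal ≤ c i) :
    variance (fun ω => ∑ i, X i ω) P ≤ 2 * r ^ 2 := by
  have hr0 : 0 ≤ r := hr ▸ Finset.sum_nonneg (fun i _ => (hc i).le)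
  set N : Fin n → ℕ := fun i => (Finset.univ.filter fun j => g j = g i).card with hN
  have hNpos : ∀ i, 0 < N i := fun i => Finset.card_pos.mpr ⟨i, by simp⟩
  have hMc : ∀ i, 0 ≤ t i * c i := by
    intro i
    apply mul_nonneg _ (hc i).le
    rw [ht i]
    have := (hc i); have := hNpos i
    positivity
  have hEsq : ∀ i, ∫ ω, X i ω ^ 2 ∂P ≤ 2 * c i * (t i * c i) := fun i =>
    sq_integral_le_aux P (X i) (hXm i) (t i * c i) (c i) (hMc i) (hc i).le
      (fun ω => hsupp i ω) (hrev i)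
  have hint : ∀ i j, Integrable (fun ω => X i ω * X j ω) P := by
    intro i j
    refine (integrable_const ((t i * c i) * (t j * c j))).mono'
      (((hXm i).mul (hXm j)).aestronglyMeasurable) (ae_of_all _ fun ω => ?_)
    rw [Real.norm_eq_abs, abs_of_nonneg (mul_nonneg (hsupp i ω).1 (hsupp j ω).1)]
    exact mul_le_mul (hsupp i ω).2 (hsupp j ω).2 (hsupp j ω).1 (hMc i)
  have hX1 : ∀ i, Integrable (X i) P := fun i => (hL2 i).integrable one_le_two
  have hS2 : MemLp (fun ω => ∑ i, X i ω) 2 P :=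
    memLp_finset_sum Finset.univ (fun i _ => hL2 i)
  have key : variance (fun ω => ∑ i, X i ω) P
      = ∑ i, ∑ j, ((∫ ω, X i ω * X j ω ∂P)
          - (∫ ω, X i ω ∂P) * (∫ ω, X j ω ∂P)) := by
    rw [variance_eq_sub hS2]
    have h1 : (∫ ω, (∑ i, X i ω) ^ 2 ∂P) = ∑ i, ∑ j, ∫ ω, X i ω * X j ω ∂P := by
      have hpt : ∀ ω, (∑ i, X i ω) ^ 2 = ∑ i, ∑ j, X i ω * X j ω := by
        intro ω; rw [sq, Finset.sum_mul_sum]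
      simp_rw [hpt]
      rw [integral_finset_sum _ (fun i _ => integrable_finset_sum _ (fun j _ => hint i j))]
      exact Finset.sum_congr rfl fun i _ => integral_finset_sum _ fun j _ => hint i j
    have h2 : (∫ ω, ∑ i, X i ω ∂P) = ∑ i, ∫ ω, X i ω ∂P :=
      integral_finset_sum _ fun i _ => hX1 i
    have h3 : ((fun ω => ∑ i, X i ω) ^ 2) = fun ω => (∑ i, X i ω) ^ 2 := rfl
    simp only [h3]
    rw [h1, h2, sq, Finset.sum_mul_sum, ← Finset.sum_sub_distrib]
    exact Finset.sum_congr rfl fun i _ => by rw [← Finset.sum_sub_distrib]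
  have hterm : ∀ i j, (∫ ω, X i ω * X j ω ∂P)
      - (∫ ω, X i ω ∂P) * (∫ ω, X j ω ∂P)
      ≤ if g j = g i then 2 * c i * (t i * c i) else 0 := by
    intro i j
    by_cases hgij : g j = g i
    · rw [if_pos hgij]
      have heq := hsame i j hgij.symm
      have e1 : ∫ ω, X i ω * X j ω ∂P = ∫ ω, X i ω ^ 2 ∂P := by
        apply integral_congr_ae
        filter_upwards [heq] with ω hω
        rw [← hω, sq]
      have e2 : ∫ ω, X j ω ∂P = ∫ ω, X i ω ∂P := integral_congr_ae heq.symm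
      rw [e1, e2]
      have := hEsq i
      nlinarith [sq_nonneg (∫ ω, X i ω ∂P)]
    · rw [if_neg hgij]
      have hmul := (hindep i j (fun h => hgij h.symm)).integral_mul_eq_mul_integral
        (hXm i).aestronglyMeasurable (hXm j).aestronglyMeasurable
      have : ∫ ω, X i ω * X j ω ∂P = (∫ ω, X i ω ∂P) * (∫ ω, X j ω ∂P) := hmul
      rw [this, sub_self]
  rw [key]
  have hinner : ∀ i, ∑ j, (if g j = g i then 2 * c i * (t i * c i) else 0)
      = 2 * c i * r := by
    intro i
    rw [← Finset.sum_filter, Finset.sum_const, nsmul_eq_mul]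
    have hNne : ((N i : ℝ)) ≠ 0 := Nat.cast_ne_zero.mpr (hNpos i).ne'
    have hcine : c i ≠ 0 := (hc i).ne'
    have hcard : ((Finset.univ.filter fun j => g j = g i).card : ℝ) = (N i : ℝ) := rfl
    have htc : t i * c i = r / (N i : ℝ) := by
      rw [ht i, hcard]
      field_simp
    rw [hcard, htc]
    calc (N i : ℝ) * (2 * c i * (r / (N i : ℝ)))
        = 2 * c i * r * ((N i : ℝ) / (N i : ℝ)) := by ring
      _ = 2 * c i * r := by rw [div_self hNne, mul_one]
  calc ∑ i, ∑ j, ((∫ ω, X i ω * X j ω ∂P) - (∫ ω, X i ω ∂P) * (∫ ω, X j ω ∂P))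
      ≤ ∑ i, ∑ j, (if g j = g i then 2 * c i * (t i * c i) else 0) :=
        Finset.sum_le_sum fun i _ => Finset.sum_le_sum fun j _ => hterm i j
    _ = ∑ i, 2 * c i * r := Finset.sum_congr rfl fun i _ => hinner i
    _ = 2 * r ^ 2 := by
        rw [hr]
        rw [← Finset.sum_mul, ← Finset.mul_sum]
        ring
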